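/- Let m ≥ 4 be even and set N = ⌈√m⌉. Then Oχ(D_m) = N if and only if m < N² − 1. -/

import Mathlib

/-- `G` admits two orthogonal proper colourings, each using at most `k` colours:
two proper colourings such that no two distinct vertices receive the same pair of colours. -/
def HasOrthColoring {V : Type*} (G : SimpleGraph V) (k : ℕ) : Prop :=
  ∃ c₁ c₂ : V → Fin k,
    (∀ ⦃u v⦄, G.Adj u v → c₁ u ≠ c₁ v) ∧
    (∀ ⦃u v⦄, G.Adj u v → c₂ u ≠ c₂ v) ∧
    Function.Injective fun v => (c₁ v, c₂ v)

/-- The double star `D_m` with `m = 2 * (l + 1)` vertices: two centres `(0, none)` and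
`(1, none)` joined by an edge, each adjacent to its own `l = m/2 - 1` leaves. -/
def doubleStar (l : ℕ) : SimpleGraph (Fin 2 × Option (Fin l)) :=
  SimpleGraph.fromRel fun a b =>
    (a = (0, none) ∧ b = (1, none)) ∨
    (a.2 = none ∧ b.1 = a.1 ∧ b.2 ≠ none)

namespace OrthAux

def fu (k i : ℕ) : ℕ := if i < k then 1 else if i < 2*k then i - k + 2 else 2 + (i - 2*k) / k
def su (k i : ℕ) : ℕ := if i < k then i + 2 else if i < 2*k then 1 else 2 + (i - 2*k) % k
def fw (k i : ℕ) : ℕ := if i < k then 0 else if i < 2*k then i - k + 2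
  else 2 + (k*k - 1 - (i - 2*k)) / k
def sw (k i : ℕ) : ℕ := if i < k then i + 2 else if i < 2*k then 0
  else 2 + (k*k - 1 - (i - 2*k)) % k

lemma two_add_ne_zero (x : ℕ) : 2 + x ≠ 0 := by omega
lemma two_add_ne_one (x : ℕ) : 2 + x ≠ 1 := by omega

lemma divmod_eq {k a b : ℕ} (h1 : a / k = b / k) (h2 : a % k = b % k) : a = b := by
  rw [← Nat.div_add_mod a k, ← Nat.div_add_mod b k, h1, h2]

lemma fu_ne_zero (k i : ℕ) : fu k i ≠ 0 := by
  unfold fu; split_ifs <;> first | omega | exact two_add_ne_zero _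
lemma su_ne_zero (k i : ℕ) : su k i ≠ 0 := by
  unfold su; split_ifs <;> first | omega | exact two_add_ne_zero _
lemma fw_ne_one (k i : ℕ) : fw k i ≠ 1 := by
  unfold fw; split_ifs <;> first | omega | exact two_add_ne_one _
lemma sw_ne_one (k i : ℕ) : sw k i ≠ 1 := by
  unfold sw; split_ifs <;> first | omega | exact two_add_ne_one _

lemma uu_ne_one (k i : ℕ) : ¬ (fu k i = 1 ∧ su k i = 1) := by
  rintro ⟨h1, h2⟩
  unfold fu at h1; unfold su at h2
  split_ifs at h1 h2 <;> first | omega | exact two_add_ne_one _ h1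

lemma ww_ne_zero (k i : ℕ) : ¬ (fw k i = 0 ∧ sw k i = 0) := by
  rintro ⟨h1, h2⟩
  unfold fw at h1; unfold sw at h2
  split_ifs at h1 h2 <;> first | omega | exact two_add_ne_zero _ h1

lemma fu_lt {k L i : ℕ} (hk : 0 < k) (hi : i < L) (hL : L ≤ k*k + 2*k) :
    fu k i < k + 2 := by
  unfold fu; split_ifs with h1 h2
  · omega
  · omega
  · have hd : (i - 2*k) / k < k := Nat.div_lt_of_lt_mul (by omega)
    have := Nat.add_lt_add_left hd 2
    omega

lemma su_lt {k L i : ℕ} (hk : 0 < k) (hi : i < L) (hL : L ≤ k*k + 2*k) :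
    su k i < k + 2 := by
  unfold su; split_ifs with h1 h2
  · omega
  · omega
  · have := Nat.mod_lt (i - 2*k) hk; omega

lemma fw_lt {k L i : ℕ} (hk : 0 < k) (hi : i < L) (hL : L ≤ k*k + 2*k) :
    fw k i < k + 2 := by
  unfold fw; split_ifs with h1 h2
  · omega
  · omega
  · have hpos : 0 < k*k := Nat.mul_pos hk hk
    have hd : (k*k - 1 - (i - 2*k)) / k < k := Nat.div_lt_of_lt_mul (by omega)
    have := Nat.add_lt_add_left hd 2
    omega

lemma sw_lt {k L i : ℕ} (hk : 0 < k) (hi : i < L) (hL : L ≤ k*k + 2*k) :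
    sw k i < k + 2 := by
  unfold sw; split_ifs with h1 h2
  · omega
  · omega
  · have := Nat.mod_lt (k*k - 1 - (i - 2*k)) hk; omega

lemma uu_inj {k i j : ℕ} (h1 : fu k i = fu k j) (h2 : su k i = su k j) : i = j := by
  unfold fu at h1; unfold su at h2
  split_ifs at h1 h2 <;>
    first
      | omega
      | exact absurd h1 (two_add_ne_one _)
      | exact absurd h1.symm (two_add_ne_one _)
      | · have heq := divmod_eq (Nat.add_left_cancel h1) (Nat.add_left_cancel h2)
          omega

lemma ww_inj {k L i j : ℕ} (hi : i < L) (hj : j < L) (hL : L ≤ k*k + 2*k)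
    (h1 : fw k i = fw k j) (h2 : sw k i = sw k j) : i = j := by
  unfold fw at h1; unfold sw at h2
  split_ifs at h1 h2 <;>
    first
      | omega
      | exact absurd h1 (two_add_ne_zero _).symm
      | exact absurd h1.symm (two_add_ne_zero _).symm
      | exact absurd h1 (two_add_ne_zero _)
      | exact absurd h1.symm (two_add_ne_zero _)
      | · have heq := divmod_eq (Nat.add_left_cancel h1) (Nat.add_left_cancel h2)
          omega

lemma cross {k L i j : ℕ} (hi : i < L) (hj : j < L) (hL : L ≤ k*k + 2*k)
    (hL2 : 2*L ≤ k*k + 4*k) : ¬ (fu k i = fw k j ∧ su k i = sw k j) := by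
  rintro ⟨h1, h2⟩
  unfold fu fw at h1; unfold su sw at h2
  split_ifs at h1 h2 <;>
    first
      | omega
      | exact absurd h1 (two_add_ne_zero _)
      | exact absurd h1.symm (two_add_ne_zero _)
      | exact absurd h1 (two_add_ne_one _)
      | exact absurd h1.symm (two_add_ne_one _)
      | · have heq := divmod_eq (Nat.add_left_cancel h1) (Nat.add_left_cancel h2)
          omega

/-- First colouring (as a natural number). -/
def Acol (k : ℕ) {l : ℕ} (v : Fin 2 × Option (Fin l)) : ℕ :=
  v.2.elim v.1.val fun i => if v.1.val = 0 then fu k i else fw k i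

/-- Second colouring (as a natural number). -/
def Bcol (k : ℕ) {l : ℕ} (v : Fin 2 × Option (Fin l)) : ℕ :=
  v.2.elim v.1.val fun i => if v.1.val = 0 then su k i else sw k i

@[simp] lemma Acol_none (k l : ℕ) (s : Fin 2) :
    Acol k ((s, none) : Fin 2 × Option (Fin l)) = s.val := rfl
@[simp] lemma Acol_some (k l : ℕ) (s : Fin 2) (i : Fin l) :
    Acol k (s, some i) = if s.val = 0 then fu k i else fw k i := rfl
@[simp] lemma Bcol_none (k l : ℕ) (s : Fin 2) :
    Bcol k ((s, none) : Fin 2 × Option (Fin l)) = s.val := rfl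
@[simp] lemma Bcol_some (k l : ℕ) (s : Fin 2) (i : Fin l) :
    Bcol k (s, some i) = if s.val = 0 then su k i else sw k i := rfl

/-- The main construction. -/
lemma construct {l N : ℕ} (hN3 : 3 ≤ N) (hl : 2 * l + 4 ≤ N ^ 2) :
    HasOrthColoring (doubleStar l) N := by
  obtain ⟨k, rfl⟩ : ∃ k, N = k + 2 := ⟨N - 2, by omega⟩
  have hkpos : 0 < k := by omega
  have hsq : (k + 2) ^ 2 = k*k + 4*k + 4 := by ring
  have hL2 : 2 * l ≤ k*k + 4*k := by omega
  have hL : l ≤ k*k + 2*k := by omega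
  have hAlt : ∀ v : Fin 2 × Option (Fin l), Acol k v < k + 2 := by
    rintro ⟨s, _ | i⟩
    · have := s.isLt; simp only [Acol_none]; omega
    · simp only [Acol_some]
      split_ifs
      · exact fu_lt hkpos i.isLt hL
      · exact fw_lt hkpos i.isLt hL
  have hBlt : ∀ v : Fin 2 × Option (Fin l), Bcol k v < k + 2 := by
    rintro ⟨s, _ | i⟩
    · have := s.isLt; simp only [Bcol_none]; omega
    · simp only [Bcol_some]
      split_ifs
      · exact su_lt hkpos i.isLt hL
      · exact sw_lt hkpos i.isLt hL
  have keyA : ∀ x y : Fin 2 × Option (Fin l),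
      ((x = (0, none) ∧ y = (1, none)) ∨ (x.2 = none ∧ y.1 = x.1 ∧ y.2 ≠ none)) →
      Acol k x ≠ Acol k y := by
    rintro ⟨s, o⟩ ⟨t, o'⟩ (⟨h1, h2⟩ | ⟨h1, h2, h3⟩)
    · injection h1 with hs ho; injection h2 with ht ho'
      subst hs; subst ho; subst ht; subst ho'
      simp only [Acol_none]
      decide
    · have hs2 := s.isLt
      obtain rfl : o = none := h1
      obtain rfl : t = s := h2
      rcases o' with _ | j
      · exact absurd rfl h3
      simp only [Acol_none, Acol_some]
      split_ifs with hs
      · intro hc; exact fu_ne_zero k j (by omega)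
      · intro hc; exact fw_ne_one k j (by omega)
  have keyB : ∀ x y : Fin 2 × Option (Fin l),
      ((x = (0, none) ∧ y = (1, none)) ∨ (x.2 = none ∧ y.1 = x.1 ∧ y.2 ≠ none)) →
      Bcol k x ≠ Bcol k y := by
    rintro ⟨s, o⟩ ⟨t, o'⟩ (⟨h1, h2⟩ | ⟨h1, h2, h3⟩)
    · injection h1 with hs ho; injection h2 with ht ho'
      subst hs; subst ho; subst ht; subst ho'
      simp only [Bcol_none]
      decide
    · have hs2 := s.isLt
      obtain rfl : o = none := h1
      obtain rfl : t = s := h2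
      rcases o' with _ | j
      · exact absurd rfl h3
      simp only [Bcol_none, Bcol_some]
      split_ifs with hs
      · intro hc; exact su_ne_zero k j (by omega)
      · intro hc; exact sw_ne_one k j (by omega)
  refine ⟨fun v => ⟨Acol k v, hAlt v⟩, fun v => ⟨Bcol k v, hBlt v⟩, ?_, ?_, ?_⟩
  · intro u v huv
    rw [doubleStar, SimpleGraph.fromRel_adj] at huv
    simp only [ne_eq, Fin.mk.injEq]
    obtain ⟨hne, h | h⟩ := huv
    · exact keyA u v h
    · exact (keyA v u h).symm
  · intro u v huv
    rw [doubleStar, SimpleGraph.fromRel_adj] at huv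
    simp only [ne_eq, Fin.mk.injEq]
    obtain ⟨hne, h | h⟩ := huv
    · exact keyB u v h
    · exact (keyB v u h).symm
  · intro u v huv
    simp only [Prod.mk.injEq, Fin.mk.injEq] at huv
    obtain ⟨hAB1, hAB2⟩ := huv
    obtain ⟨s, o⟩ := u; obtain ⟨t, o'⟩ := v
    have hs2 := s.isLt; have ht2 := t.isLt
    rcases o with _ | i <;> rcases o' with _ | j
    · simp only [Acol_none] at hAB1
      rw [Fin.ext hAB1]
    · exfalso
      simp only [Acol_none, Acol_some, Bcol_none, Bcol_some] at hAB1 hAB2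
      split_ifs at hAB1 hAB2 with ht
      · rcases (show (s:ℕ) = 0 ∨ (s:ℕ) = 1 by omega) with hs | hs <;> rw [hs] at hAB1 hAB2
        · exact fu_ne_zero k j hAB1.symm
        · exact uu_ne_one k j ⟨hAB1.symm, hAB2.symm⟩
      · rcases (show (s:ℕ) = 0 ∨ (s:ℕ) = 1 by omega) with hs | hs <;> rw [hs] at hAB1 hAB2
        · exact ww_ne_zero k j ⟨hAB1.symm, hAB2.symm⟩
        · exact fw_ne_one k j hAB1.symm
    · exfalso
      simp only [Acol_none, Acol_some, Bcol_none, Bcol_some] at hAB1 hAB2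
      split_ifs at hAB1 hAB2 with hs
      · rcases (show (t:ℕ) = 0 ∨ (t:ℕ) = 1 by omega) with ht | ht <;> rw [ht] at hAB1 hAB2
        · exact fu_ne_zero k i hAB1
        · exact uu_ne_one k i ⟨hAB1, hAB2⟩
      · rcases (show (t:ℕ) = 0 ∨ (t:ℕ) = 1 by omega) with ht | ht <;> rw [ht] at hAB1 hAB2
        · exact ww_ne_zero k i ⟨hAB1, hAB2⟩
        · exact fw_ne_one k i hAB1
    · simp only [Acol_some, Bcol_some] at hAB1 hAB2
      split_ifs at hAB1 hAB2 with hs ht ht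
      · obtain rfl : i = j := Fin.ext (uu_inj hAB1 hAB2)
        obtain rfl : s = t := Fin.ext (by omega)
        rfl
      · exact absurd ⟨hAB1, hAB2⟩ (cross i.isLt j.isLt hL hL2)
      · exact absurd ⟨hAB1.symm, hAB2.symm⟩ (cross j.isLt i.isLt hL hL2)
      · obtain rfl : i = j := Fin.ext (ww_inj i.isLt j.isLt hL hAB1 hAB2)
        obtain rfl : s = t := Fin.ext (by omega)
        rfl

/-- Basic counting bound: the pair map is injective into `Fin k × Fin k`. -/
lemma card_le {l k : ℕ} (h : HasOrthColoring (doubleStar l) k) :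
    2 * (l + 1) ≤ k ^ 2 := by
  obtain ⟨c₁, c₂, _, _, hinj⟩ := h
  have := Fintype.card_le_of_injective _ hinj
  rw [pow_two]
  simpa [Fintype.card_prod, Fintype.card_option] using this

lemma adj_centers (l : ℕ) : (doubleStar l).Adj (0, none) (1, none) := by
  rw [doubleStar, SimpleGraph.fromRel_adj]
  refine ⟨?_, Or.inl (Or.inl ⟨rfl, rfl⟩)⟩
  intro h
  injection h with h1 _
  exact absurd h1 (by decide)

lemma adj_leaf (l : ℕ) (s : Fin 2) (i : Fin l) :
    (doubleStar l).Adj (s, none) (s, some i) := by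
  rw [doubleStar, SimpleGraph.fromRel_adj]
  refine ⟨?_, Or.inl (Or.inr ⟨rfl, rfl, fun h => Option.some_ne_none _ h⟩)⟩
  intro h
  injection h with _ h2
  cases h2

/-- Sharper counting bound: two pairs can never be used. -/
lemma card_le_sharp {l k : ℕ} (h : HasOrthColoring (doubleStar l) k) :
    2 * (l + 1) + 2 ≤ k ^ 2 := by
  have hbasic := card_le h
  rw [pow_two] at hbasic ⊢
  obtain ⟨c₁, c₂, h₁, h₂, hinj⟩ := h
  have huw := adj_centers l
  have hkey : ∀ v : Fin 2 × Option (Fin l),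
      (c₁ v, c₂ v) ≠ (c₁ (0, none), c₂ (1, none)) ∧
      (c₁ v, c₂ v) ≠ (c₁ (1, none), c₂ (0, none)) := by
    rintro ⟨s, o⟩
    have hs2 := s.isLt
    rcases o with _ | i
    · rcases (show (s:ℕ) = 0 ∨ (s:ℕ) = 1 by omega) with hs | hs
      · obtain rfl : s = 0 := Fin.ext hs
        exact ⟨fun hc => h₂ huw (congrArg Prod.snd hc),
               fun hc => h₁ huw (congrArg Prod.fst hc)⟩
      · obtain rfl : s = 1 := Fin.ext hs
        exact ⟨fun hc => h₁ huw (congrArg Prod.fst hc).symm,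
               fun hc => h₂ huw (congrArg Prod.snd hc).symm⟩
    · rcases (show (s:ℕ) = 0 ∨ (s:ℕ) = 1 by omega) with hs | hs
      · obtain rfl : s = 0 := Fin.ext hs
        have hadj := adj_leaf l 0 i
        exact ⟨fun hc => h₁ hadj (congrArg Prod.fst hc).symm,
               fun hc => h₂ hadj (congrArg Prod.snd hc).symm⟩
      · obtain rfl : s = 1 := Fin.ext hs
        have hadj := adj_leaf l 1 i
        exact ⟨fun hc => h₂ hadj (congrArg Prod.snd hc).symm,
               fun hc => h₁ hadj (congrArg Prod.fst hc).symm⟩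
  have hp12 : (c₁ ((0 : Fin 2), (none : Option (Fin l))), c₂ (1, none)) ≠
      (c₁ (1, none), c₂ (0, none)) :=
    fun hc => h₁ huw (congrArg Prod.fst hc)
  have hsub : Finset.univ.image (fun v => (c₁ v, c₂ v)) ⊆ Finset.univ \
      {(c₁ ((0 : Fin 2), (none : Option (Fin l))), c₂ (1, none)),
       (c₁ (1, none), c₂ (0, none))} := by
    intro x hx
    rw [Finset.mem_sdiff]
    refine ⟨Finset.mem_univ _, ?_⟩
    simp only [Finset.mem_image, Finset.mem_univ, true_and] at hx
    obtain ⟨v, rfl⟩ := hx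
    simp only [Finset.mem_insert, Finset.mem_singleton]
    push_neg
    exact hkey v
  have hcard1 : (Finset.univ.image (fun v : Fin 2 × Option (Fin l) => (c₁ v, c₂ v))).card
      = 2 * (l + 1) := by
    rw [Finset.card_image_of_injective _ hinj, Finset.card_univ]
    simp [Fintype.card_prod, Fintype.card_option]
  have hcard2 : (Finset.univ \
      {(c₁ ((0 : Fin 2), (none : Option (Fin l))), c₂ (1, none)),
       (c₁ (1, none), c₂ (0, none))} : Finset (Fin k × Fin k)).card = k * k - 2 := by
    rw [Finset.card_sdiff_of_subset (Finset.subset_univ _), Finset.card_univ]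
    simp [Fintype.card_prod, hp12]
  have hle := Finset.card_le_card hsub
  rw [hcard1, hcard2] at hle
  omega

end OrthAux

/-- For even `m ≥ 4` and `N = ⌈√m⌉`, the double star `D_m` (here `doubleStar (m/2 - 1)`)
satisfies `Oχ(D_m) = N` if and only if `m < N² - 1`. -/
theorem orthChromatic_doubleStar_iff (m : ℕ) (hm : 4 ≤ m) (hme : Even m)
    (N : ℕ) (hN : N = ⌈Real.sqrt m⌉₊) :
    IsLeast {k | HasOrthColoring (doubleStar (m / 2 - 1)) k} N ↔ m < N ^ 2 - 1 := by
  obtain ⟨t, ht⟩ := hme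
  have hm2 : 2 * (m / 2 - 1 + 1) = m := by omega
  constructor
  · intro h
    have hsharp := OrthAux.card_le_sharp h.1
    rw [hm2] at hsharp
    obtain ⟨K, hK⟩ : ∃ K, K = N ^ 2 := ⟨_, rfl⟩
    rw [← hK] at hsharp ⊢
    omega
  · intro hlt
    obtain ⟨K, hK⟩ : ∃ K, K = N ^ 2 := ⟨_, rfl⟩
    rw [← hK] at hlt
    have hm2K : m + 2 ≤ K := by omega
    have hN3 : 3 ≤ N := by
      by_contra hc
      have h4 : N ^ 2 ≤ 2 ^ 2 := Nat.pow_le_pow_left (by omega) 2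
      omega
    constructor
    · refine OrthAux.construct hN3 ?_
      rw [← hK]
      omega
    · intro j hj
      have hcard := OrthAux.card_le hj
      rw [hm2] at hcard
      rw [hN, Nat.ceil_le]
      have h1 : (m : ℝ) ≤ (j : ℝ) ^ 2 := by exact_mod_cast hcard
      have h2 : Real.sqrt m ≤ Real.sqrt ((j : ℝ) ^ 2) := Real.sqrt_le_sqrt h1
      rwa [Real.sqrt_sq (by positivity)] at h2
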